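/- Let G be a Garside group of finite type and x ∈ G with ℓ(x) > 1. Then: (1) if Δ ≼ φ(x)ι(x) and φ(x)ι(x) ≼ Δ, then 𝔰(x) = τ(d(x)) = c(x) and ℓ(𝔰(x)) < ℓ(x); (2) if Δ ⋠ φ(x)ι(x) and φ(x)ι(x) ≼ Δ, then 𝔰(x) = c(d(x)) = c(x) and ℓ(𝔰(x)) < ℓ(x); (3) if Δ ≼ φ(x)ι(x) and φ(x)ι(x) ⋠ Δ, then 𝔰(x) = τ(d(x)) = d(c(x)) and ℓ(𝔰(x)) < ℓ(x); (4) if Δ ⋠ φ(x)ι(x) and φ(x)ι(x) ⋠ Δ, then 𝔰(x) = c(d(x)) = d(c(x)). Moreover, if ℓ(c(d(x))) = ℓ(x) or ℓ(d(c(x))) = ℓ(x), then case (4) applies, and in particular d(c(x)) = c(d(x)). -/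

import Mathlib

namespace GarsidePaper

/-- A Garside structure of finite type on a group `G`: a positive submonoid `P` with
`P ∩ P⁻¹ = {1}`, a Garside element `Δ ∈ P`, the prefix order `a ≼ b ↔ a⁻¹b ∈ P`
a lattice order (with meet `wedge` and join `vee`), the simple elements `[1,Δ]`
generating `G` and being finite, `Δ⁻¹PΔ = P`, a finite norm on positive elements,
and the infimum and supremum functions `inf`, `sup` characterised by
`Δ^(inf x) ≼ x ≼ Δ^(sup x)` with `inf x` maximal and `sup x` minimal. -/
structure Garside (G : Type*) [Group G] where
  P : Submonoid G
  Δ : G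
  purity : ∀ a : G, a ∈ P → a⁻¹ ∈ P → a = 1
  delta_mem : Δ ∈ P
  wedge : G → G → G
  vee : G → G → G
  wedge_le_left : ∀ a b : G, (wedge a b)⁻¹ * a ∈ P
  wedge_le_right : ∀ a b : G, (wedge a b)⁻¹ * b ∈ P
  le_wedge : ∀ a b c : G, c⁻¹ * a ∈ P → c⁻¹ * b ∈ P → c⁻¹ * wedge a b ∈ P
  le_vee_left : ∀ a b : G, a⁻¹ * vee a b ∈ P
  le_vee_right : ∀ a b : G, b⁻¹ * vee a b ∈ P
  vee_le : ∀ a b c : G, a⁻¹ * c ∈ P → b⁻¹ * c ∈ P → (vee a b)⁻¹ * c ∈ P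
  simples_generate : Subgroup.closure {a : G | a ∈ P ∧ a⁻¹ * Δ ∈ P} = (⊤ : Subgroup G)
  conj_pos : ∀ a : G, a ∈ P → Δ⁻¹ * a * Δ ∈ P
  norm : G → ℕ
  norm_exists : ∀ x : G, x ∈ P → x ≠ 1 →
    ∃ l : List G, (∀ s ∈ l, s ∈ P ∧ s ≠ 1) ∧ l.prod = x ∧ l.length = norm x
  norm_max : ∀ x : G, x ∈ P → x ≠ 1 →
    ∀ l : List G, (∀ s ∈ l, s ∈ P ∧ s ≠ 1) → l.prod = x → l.length ≤ norm x
  simples_finite : Set.Finite {a : G | a ∈ P ∧ a⁻¹ * Δ ∈ P}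
  inf : G → ℤ
  sup : G → ℤ
  inf_le : ∀ x : G, (Δ ^ inf x)⁻¹ * x ∈ P
  inf_max : ∀ (x : G) (p : ℤ), (Δ ^ p)⁻¹ * x ∈ P → p ≤ inf x
  le_sup : ∀ x : G, x⁻¹ * Δ ^ sup x ∈ P
  sup_min : ∀ (x : G) (q : ℤ), x⁻¹ * Δ ^ q ∈ P → sup x ≤ q

namespace Garside

variable {G : Type*} [Group G]

/-- The prefix order `a ≼ b`. -/
def le (S : Garside G) (a b : G) : Prop := a⁻¹ * b ∈ S.P

/-- The canonical length `ℓ(x) = sup(x) - inf(x)`. -/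
def len (S : Garside G) (x : G) : ℤ := S.sup x - S.inf x

/-- The initial factor `ι(x) = (x Δ^(-inf x)) ∧ Δ`. -/
def iota (S : Garside G) (x : G) : G := S.wedge (x * S.Δ ^ (-S.inf x)) S.Δ

/-- The preferred prefix `𝔭(x) = ι(x) ∧ ι(x⁻¹)`. -/
def pp (S : Garside G) (x : G) : G := S.wedge (S.iota x) (S.iota x⁻¹)

/-- Cyclic sliding `𝔰(x) = 𝔭(x)⁻¹ x 𝔭(x)`. -/
def sl (S : Garside G) (x : G) : G := (S.pp x)⁻¹ * x * S.pp x

/-- The final factor `φ(x) = (Δ^(sup x - 1) ∧ x)⁻¹ x`. -/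
def phi (S : Garside G) (x : G) : G := (S.wedge (S.Δ ^ (S.sup x - 1)) x)⁻¹ * x

/-- Conjugation by `Δ`: `τ(x) = Δ⁻¹ x Δ`. -/
def tau (S : Garside G) (x : G) : G := S.Δ⁻¹ * x * S.Δ

/-- Cycling `c(x) = ι(x)⁻¹ x ι(x)`. -/
def cyc (S : Garside G) (x : G) : G := (S.iota x)⁻¹ * x * S.iota x

/-- Decycling `d(x) = φ(x) x φ(x)⁻¹`. -/
def dec (S : Garside G) (x : G) : G := S.phi x * x * (S.phi x)⁻¹

/-- The transport `α^{(1)} = 𝔭(x)⁻¹ α 𝔭(x^α)` of `α` at `x`. -/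
def transport (S : Garside G) (x α : G) : G := (S.pp x)⁻¹ * α * S.pp (α⁻¹ * x * α)

/-- The iterated transport: `itTransport x i α = α^{(i)}`, the transport of `α^{(i-1)}`
at `𝔰^{i-1}(x)`, with `α^{(0)} = α`. -/
def itTransport (S : Garside G) (x : G) : ℕ → G → G
  | 0, α => α
  | i + 1, α => S.transport ((S.sl)^[i] x) (S.itTransport x i α)

/-- `𝔓_i(x) = 𝔭(x) 𝔭(𝔰(x)) ⋯ 𝔭(𝔰^{i-1}(x))`, with `𝔓₀(x) = 1`. -/
def PP (S : Garside G) (x : G) : ℕ → G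
  | 0 => 1
  | i + 1 => S.PP x i * S.pp ((S.sl)^[i] x)

/-- The summit set `SS(x)`. -/
def SS (S : Garside G) (x : G) : Set G :=
  {y | IsConj x y ∧ ∀ z : G, IsConj x z → S.inf z ≤ S.inf y}

/-- The super summit set `SSS(x)`. -/
def SSS (S : Garside G) (x : G) : Set G :=
  {y | IsConj x y ∧ (∀ z : G, IsConj x z → S.inf z ≤ S.inf y) ∧
       (∀ z : G, IsConj x z → S.sup y ≤ S.sup z)}

/-- The ultra summit set `USS(x)`. -/
def USS (S : Garside G) (x : G) : Set G :=
  {y | y ∈ S.SSS x ∧ ∃ m : ℕ, 1 ≤ m ∧ (S.cyc)^[m] y = y}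

/-- The reduced super summit set `RSSS(x)`. -/
def RSSS (S : Garside G) (x : G) : Set G :=
  {y | IsConj x y ∧ (∃ m : ℕ, 1 ≤ m ∧ (S.cyc)^[m] y = y) ∧
       (∃ n : ℕ, 1 ≤ n ∧ (S.dec)^[n] y = y)}

/-- The set of sliding circuits `SC(x)`. -/
def SC (S : Garside G) (x : G) : Set G :=
  {y | IsConj x y ∧ ∃ m : ℕ, 1 ≤ m ∧ (S.sl)^[m] y = y}


variable (S : Garside G)

/-! ### Basic facts about the prefix order -/

lemma mem_P_of_eq {a b : G} (h : a ∈ S.P) (e : a = b) : b ∈ S.P := e ▸ h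

lemma le_def' {a b : G} : S.le a b ↔ a⁻¹ * b ∈ S.P := Iff.rfl

lemma le_congr {a b a' b' : G} (e : a⁻¹ * b = a'⁻¹ * b') : S.le a b ↔ S.le a' b' := by
  unfold le; rw [e]

lemma le_refl' (a : G) : S.le a a := by
  unfold le; simpa using S.P.one_mem

lemma le_trans' {a b c : G} (h1 : S.le a b) (h2 : S.le b c) : S.le a c := by
  have h := S.P.mul_mem h1 h2
  exact S.mem_P_of_eq h (by group)

lemma le_antisymm' {a b : G} (h1 : S.le a b) (h2 : S.le b a) : a = b := by
  have h3 : (a⁻¹ * b)⁻¹ ∈ S.P := S.mem_P_of_eq h2 (by group)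
  have h4 := S.purity _ h1 h3
  exact (inv_mul_eq_one.mp h4)

lemma one_le_iff {a : G} : S.le 1 a ↔ a ∈ S.P := by unfold le; simp

lemma le_cancel_left {c a b : G} : S.le (c * a) (c * b) ↔ S.le a b :=
  S.le_congr (by group)

lemma one_le_delta : S.le 1 S.Δ := by
  rw [S.one_le_iff]; exact S.delta_mem

/-! ### wedge and vee -/

lemma wedge_le_left' (a b : G) : S.le (S.wedge a b) a := S.wedge_le_left a b

lemma wedge_le_right' (a b : G) : S.le (S.wedge a b) b := S.wedge_le_right a b

lemma le_wedge' {a b c : G} (h1 : S.le c a) (h2 : S.le c b) : S.le c (S.wedge a b) :=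
  S.le_wedge a b c h1 h2

lemma le_vee_left' (a b : G) : S.le a (S.vee a b) := S.le_vee_left a b

lemma le_vee_right' (a b : G) : S.le b (S.vee a b) := S.le_vee_right a b

lemma vee_le' {a b c : G} (h1 : S.le a c) (h2 : S.le b c) : S.le (S.vee a b) c :=
  S.vee_le a b c h1 h2

lemma wedge_eq {a b c : G} (h1 : S.le c a) (h2 : S.le c b)
    (h3 : ∀ d, S.le d a → S.le d b → S.le d c) : S.wedge a b = c :=
  S.le_antisymm' (h3 _ (S.wedge_le_left' a b) (S.wedge_le_right' a b)) (S.le_wedge' h1 h2)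

lemma wedge_comm (a b : G) : S.wedge a b = S.wedge b a :=
  S.wedge_eq (S.wedge_le_right' b a) (S.wedge_le_left' b a)
    (fun _ h1 h2 => S.le_wedge' h2 h1)

lemma wedge_eq_left {a b : G} (h : S.le a b) : S.wedge a b = a :=
  S.wedge_eq (S.le_refl' a) h (fun _ h1 _ => h1)

lemma wedge_eq_right {a b : G} (h : S.le b a) : S.wedge a b = b :=
  S.wedge_eq h (S.le_refl' b) (fun _ _ h2 => h2)

lemma mul_wedge (c a b : G) : c * S.wedge a b = S.wedge (c * a) (c * b) := by
  symm
  refine S.wedge_eq (S.le_cancel_left.mpr (S.wedge_le_left' a b))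
    (S.le_cancel_left.mpr (S.wedge_le_right' a b)) (fun d hd1 hd2 => ?_)
  refine (S.le_congr (show d⁻¹ * (c * S.wedge a b) = (c⁻¹ * d)⁻¹ * S.wedge a b from by group)).mpr ?_
  exact S.le_wedge' ((S.le_congr (by group)).mp hd1) ((S.le_congr (by group)).mp hd2)

lemma wedge_wedge_of_le {a b c : G} (h : S.le c a) : S.wedge (S.wedge a b) c = S.wedge b c := by
  refine S.wedge_eq (S.le_wedge' (S.le_trans' (S.wedge_le_right' b c) h) (S.wedge_le_left' b c))
    (S.wedge_le_right' b c) (fun d h1 h2 => ?_)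
  exact S.le_wedge' (S.le_trans' h1 (S.wedge_le_right' a b)) h2

/-! ### Conjugation by Δ -/

lemma conj_pow_mem {a : G} (ha : a ∈ S.P) : ∀ n : ℕ, (S.Δ ^ n)⁻¹ * a * S.Δ ^ n ∈ S.P := by
  intro n
  induction n with
  | zero => simpa using ha
  | succ k ih =>
    have h := S.conj_pos _ ih
    exact S.mem_P_of_eq h (by rw [pow_succ]; group)

lemma iterate_tau_eq (n : ℕ) (g : G) :
    (fun g => S.Δ⁻¹ * g * S.Δ)^[n] g = (S.Δ ^ n)⁻¹ * g * S.Δ ^ n := by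
  induction n generalizing g with
  | zero => simp
  | succ k ih =>
    rw [Function.iterate_succ_apply, ih, pow_succ]
    group

lemma exists_central : ∃ m : ℕ, 0 < m ∧ ∀ g : G, S.Δ ^ m * g = g * S.Δ ^ m := by
  classical
  set Sim := {a : G | a ∈ S.P ∧ a⁻¹ * S.Δ ∈ S.P} with hSim
  have hfin : Sim.Finite := S.simples_finite
  haveI : Fintype Sim := hfin.fintype
  set t : G → G := fun g => S.Δ⁻¹ * g * S.Δ with ht
  have htinj : Function.Injective t := by
    intro a b hab
    simpa [ht] using hab
  have hmaps : ∀ a ∈ Sim, t a ∈ Sim := by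
    intro a ha
    exact ⟨S.conj_pos a ha.1, S.mem_P_of_eq (S.conj_pos _ ha.2) (by simp only [ht]; group)⟩
  have hiter : ∀ (n : ℕ), ∀ a ∈ Sim, t^[n] a ∈ Sim := by
    intro n
    induction n with
    | zero => intro a ha; simpa using ha
    | succ k ih =>
      intro a ha
      rw [Function.iterate_succ_apply']
      exact hmaps _ (ih a ha)
  obtain ⟨k, l, hkl, he⟩ := Finite.exists_ne_map_eq_of_infinite
    (fun (n : ℕ) => (fun a : Sim => (⟨t^[n] a, hiter n a a.2⟩ : Sim)))
  have hfix : ∀ (k l : ℕ), k < l →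
      ((fun a : Sim => (⟨t^[k] a, hiter k a a.2⟩ : Sim)) =
       (fun a : Sim => (⟨t^[l] a, hiter l a a.2⟩ : Sim))) →
      ∃ m : ℕ, 0 < m ∧ ∀ a ∈ Sim, t^[m] a = a := by
    intro k l hlt hee
    refine ⟨l - k, by omega, fun a ha => ?_⟩
    have h1 : t^[k] a = t^[l] a := by
      have := congrFun hee ⟨a, ha⟩
      exact congrArg Subtype.val this
    have h2 : t^[k] (t^[l-k] a) = t^[k] a := by
      rw [← Function.iterate_add_apply]
      rw [show k + (l - k) = l from by omega]
      exact h1.symm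
    exact htinj.iterate k h2
  have hm : ∃ m : ℕ, 0 < m ∧ ∀ a ∈ Sim, t^[m] a = a := by
    rcases Nat.lt_or_ge k l with h | h
    · exact hfix k l h he
    · exact hfix l k (by omega) he.symm
  obtain ⟨m, hm0, hmfix⟩ := hm
  refine ⟨m, hm0, fun g => ?_⟩
  have hgen : g ∈ Subgroup.closure Sim := by
    rw [hSim, S.simples_generate]; trivial
  have key : ∀ a ∈ Sim, S.Δ ^ m * a = a * S.Δ ^ m := by
    intro a ha
    have := hmfix a ha
    rw [S.iterate_tau_eq] at this
    calc S.Δ ^ m * a = S.Δ ^ m * ((S.Δ ^ m)⁻¹ * a * S.Δ ^ m) := by rw [this]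
    _ = a * S.Δ ^ m := by group
  have : Commute (S.Δ ^ m) g := by
    refine Subgroup.closure_induction (fun a ha => key a ha) (Commute.one_right _)
      (fun a b _ _ h1 h2 => h1.mul_right h2) (fun a _ h1 => h1.inv_right) hgen
  exact this

lemma conj_pos_inv {a : G} (ha : a ∈ S.P) : S.Δ * a * S.Δ⁻¹ ∈ S.P := by
  obtain ⟨m, hm0, hc⟩ := S.exists_central
  obtain ⟨k, rfl⟩ : ∃ k, m = k + 1 := ⟨m - 1, by omega⟩
  have h := S.conj_pow_mem ha k
  apply S.mem_P_of_eq h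
  calc (S.Δ ^ k)⁻¹ * a * S.Δ ^ k
      = (S.Δ ^ k)⁻¹ * (a * S.Δ ^ (k+1)) * S.Δ⁻¹ := by rw [pow_succ]; group
    _ = (S.Δ ^ k)⁻¹ * (S.Δ ^ (k+1) * a) * S.Δ⁻¹ := by rw [← hc a]
    _ = S.Δ * a * S.Δ⁻¹ := by rw [pow_succ]; group

lemma conj_pow_mem' {a : G} (ha : a ∈ S.P) : ∀ n : ℕ, S.Δ ^ n * a * (S.Δ ^ n)⁻¹ ∈ S.P := by
  intro n
  induction n with
  | zero => simpa using ha
  | succ k ih =>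
    have h := S.conj_pos_inv ih
    exact S.mem_P_of_eq h (by rw [pow_succ]; group)

lemma conj_zpow_of (k : ℤ) {a : G} (ha : a ∈ S.P) : (S.Δ ^ k)⁻¹ * a * S.Δ ^ k ∈ S.P := by
  rcases k with n | n
  · exact S.mem_P_of_eq (S.conj_pow_mem ha n) (by rw [Int.ofNat_eq_coe, zpow_natCast])
  · exact S.mem_P_of_eq (S.conj_pow_mem' ha (n+1)) (by rw [zpow_negSucc]; group)

lemma conj_zpow_mem (k : ℤ) (a : G) : (S.Δ ^ k)⁻¹ * a * S.Δ ^ k ∈ S.P ↔ a ∈ S.P := by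
  constructor
  · intro h
    exact S.mem_P_of_eq (S.conj_zpow_of (-k) h) (by group)
  · exact S.conj_zpow_of k

/-! ### Powers of Δ and inf/sup -/

lemma le_conj_zpow (k : ℤ) {a b : G} :
    S.le ((S.Δ ^ k)⁻¹ * a * S.Δ ^ k) ((S.Δ ^ k)⁻¹ * b * S.Δ ^ k) ↔ S.le a b := by
  unfold le
  rw [show ((S.Δ ^ k)⁻¹ * a * S.Δ ^ k)⁻¹ * ((S.Δ ^ k)⁻¹ * b * S.Δ ^ k)
      = (S.Δ ^ k)⁻¹ * (a⁻¹ * b) * S.Δ ^ k from by group]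
  exact S.conj_zpow_mem k _

lemma le_mul_delta (k : ℤ) {a b : G} : S.le (a * S.Δ ^ k) (b * S.Δ ^ k) ↔ S.le a b := by
  unfold le
  rw [show (a * S.Δ ^ k)⁻¹ * (b * S.Δ ^ k) = (S.Δ ^ k)⁻¹ * (a⁻¹ * b) * S.Δ ^ k from by group]
  exact S.conj_zpow_mem k _

lemma wedge_mul_delta (a b : G) (k : ℤ) :
    S.wedge (a * S.Δ ^ k) (b * S.Δ ^ k) = S.wedge a b * S.Δ ^ k := by
  refine S.wedge_eq ((S.le_mul_delta k).mpr (S.wedge_le_left' a b))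
    ((S.le_mul_delta k).mpr (S.wedge_le_right' a b)) (fun d hd1 hd2 => ?_)
  have e : d * S.Δ ^ (-k) * S.Δ ^ k = d := by group
  have h1 : S.le (d * S.Δ ^ (-k)) a := (S.le_mul_delta k).mp (by rw [e]; exact hd1)
  have h2 : S.le (d * S.Δ ^ (-k)) b := (S.le_mul_delta k).mp (by rw [e]; exact hd2)
  have h3 := (S.le_mul_delta k).mpr (S.le_wedge' h1 h2)
  rw [e] at h3
  exact h3

lemma delta_zpow_mem {k : ℤ} (h : 0 ≤ k) : S.Δ ^ k ∈ S.P := by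
  lift k to ℕ using h
  rw [zpow_natCast]
  exact pow_mem S.delta_mem k

lemma delta_zpow_le {j k : ℤ} (h : j ≤ k) : S.le (S.Δ ^ j) (S.Δ ^ k) := by
  unfold le
  rw [show (S.Δ ^ j)⁻¹ * S.Δ ^ k = S.Δ ^ (k - j) from by group]
  exact S.delta_zpow_mem (by omega)

lemma le_sup' (x : G) : S.le x (S.Δ ^ S.sup x) := S.le_sup x

lemma inf_le' (x : G) : S.le (S.Δ ^ S.inf x) x := S.inf_le x

lemma le_delta_pow {x : G} {k : ℤ} : S.le x (S.Δ ^ k) ↔ S.sup x ≤ k :=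
  ⟨fun h => S.sup_min x k h, fun h => S.le_trans' (S.le_sup' x) (S.delta_zpow_le h)⟩

lemma delta_pow_le {x : G} {k : ℤ} : S.le (S.Δ ^ k) x ↔ k ≤ S.inf x :=
  ⟨fun h => S.inf_max x k h, fun h => S.le_trans' (S.delta_zpow_le h) (S.inf_le' x)⟩

lemma delta_pow_le_inv {x : G} {k : ℤ} : S.le (S.Δ ^ k) x⁻¹ ↔ S.le x (S.Δ ^ (-k)) := by
  unfold le
  constructor
  · intro h
    exact S.mem_P_of_eq ((S.conj_zpow_mem (-k) _).mpr h) (by group)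
  · intro h
    exact S.mem_P_of_eq ((S.conj_zpow_mem k _).mpr h) (by group)

lemma inv_le_delta_pow {x : G} {k : ℤ} : S.le x⁻¹ (S.Δ ^ k) ↔ S.le (S.Δ ^ (-k)) x := by
  unfold le
  constructor
  · intro h
    exact S.mem_P_of_eq ((S.conj_zpow_mem (-k) _).mpr h) (by group)
  · intro h
    exact S.mem_P_of_eq ((S.conj_zpow_mem k _).mpr h) (by group)

lemma inf_inv (x : G) : S.inf x⁻¹ = - S.sup x := by
  refine le_antisymm ?_ ?_
  · have h1 : S.le x (S.Δ ^ (- S.inf x⁻¹)) := S.delta_pow_le_inv.mp (S.inf_le' x⁻¹)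
    have := S.le_delta_pow.mp h1
    omega
  · refine S.delta_pow_le.mp (S.delta_pow_le_inv.mpr ?_)
    rw [neg_neg]
    exact S.le_sup' x

lemma sup_inv (x : G) : S.sup x⁻¹ = - S.inf x := by
  refine le_antisymm ?_ ?_
  · refine S.le_delta_pow.mp (S.inv_le_delta_pow.mpr ?_)
    rw [neg_neg]
    exact S.inf_le' x
  · have h1 : S.le (S.Δ ^ (- S.sup x⁻¹)) x := S.inv_le_delta_pow.mp (S.le_sup' x⁻¹)
    have := S.delta_pow_le.mp h1
    omega

lemma le_delta_shift {x : G} {j k : ℤ} : S.le (S.Δ ^ j) (x * S.Δ ^ k) ↔ S.le (S.Δ ^ (j - k)) x := by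
  unfold le
  constructor
  · intro h
    exact S.mem_P_of_eq ((S.conj_zpow_mem (-k) _).mpr h) (by group)
  · intro h
    exact S.mem_P_of_eq ((S.conj_zpow_mem k _).mpr h) (by group)

lemma delta_shift_le {x : G} {j k : ℤ} : S.le (x * S.Δ ^ k) (S.Δ ^ j) ↔ S.le x (S.Δ ^ (j - k)) := by
  unfold le
  constructor
  · intro h
    exact S.mem_P_of_eq ((S.conj_zpow_mem (-k) _).mpr h) (by group)
  · intro h
    exact S.mem_P_of_eq ((S.conj_zpow_mem k _).mpr h) (by group)

lemma inf_mul_delta (x : G) (k : ℤ) : S.inf (x * S.Δ ^ k) = S.inf x + k := by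
  refine le_antisymm ?_ ?_
  · have h := S.le_delta_shift.mp (S.inf_le' (x * S.Δ ^ k))
    have := S.delta_pow_le.mp h
    omega
  · refine S.delta_pow_le.mp (S.le_delta_shift.mpr ?_)
    rw [show S.inf x + k - k = S.inf x from by ring]
    exact S.inf_le' x

lemma sup_mul_delta (x : G) (k : ℤ) : S.sup (x * S.Δ ^ k) = S.sup x + k := by
  refine le_antisymm ?_ ?_
  · refine S.le_delta_pow.mp (S.delta_shift_le.mpr ?_)
    rw [show S.sup x + k - k = S.sup x from by ring]
    exact S.le_sup' x
  · have h := S.delta_shift_le.mp (S.le_sup' (x * S.Δ ^ k))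
    have := S.le_delta_pow.mp h
    omega

lemma inf_tau (x : G) : S.inf (S.tau x) = S.inf x := by
  have key : ∀ j : ℤ, S.le (S.Δ ^ j) (S.tau x) ↔ S.le (S.Δ ^ j) x := by
    intro j
    unfold tau le
    constructor
    · intro h
      exact S.mem_P_of_eq ((S.conj_zpow_mem (-1) _).mpr h) (by group)
    · intro h
      exact S.mem_P_of_eq ((S.conj_zpow_mem 1 _).mpr h) (by group)
  refine le_antisymm ?_ ?_
  · exact S.delta_pow_le.mp ((key _).mp (S.inf_le' _))
  · exact S.delta_pow_le.mp ((key _).mpr (S.inf_le' _))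

lemma sup_tau (x : G) : S.sup (S.tau x) = S.sup x := by
  have key : ∀ j : ℤ, S.le (S.tau x) (S.Δ ^ j) ↔ S.le x (S.Δ ^ j) := by
    intro j
    unfold tau le
    constructor
    · intro h
      exact S.mem_P_of_eq ((S.conj_zpow_mem (-1) _).mpr h) (by group)
    · intro h
      exact S.mem_P_of_eq ((S.conj_zpow_mem 1 _).mpr h) (by group)
  refine le_antisymm ?_ ?_
  · exact S.le_delta_pow.mp ((key _).mpr (S.le_sup' _))
  · exact S.le_delta_pow.mp ((key _).mp (S.le_sup' _))

lemma len_tau (x : G) : S.len (S.tau x) = S.len x := by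
  unfold len
  rw [S.inf_tau, S.sup_tau]

lemma len_inv (x : G) : S.len x⁻¹ = S.len x := by
  unfold len
  rw [S.inf_inv, S.sup_inv]
  ring

lemma len_nonneg (x : G) : 0 ≤ S.len x := by
  unfold len
  by_contra hq
  push_neg at hq
  have a : (S.Δ ^ S.inf x)⁻¹ * x ∈ S.P := S.inf_le x
  have b : x⁻¹ * S.Δ ^ S.sup x ∈ S.P := S.le_sup x
  have c : S.Δ ^ (S.sup x - S.inf x) ∈ S.P :=
    S.mem_P_of_eq (S.P.mul_mem a b) (by group)
  have d : (S.Δ ^ (S.sup x - S.inf x))⁻¹ ∈ S.P :=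
    S.mem_P_of_eq (S.delta_zpow_mem (k := S.inf x - S.sup x) (by omega)) (by group)
  have e1 : S.Δ ^ (S.sup x - S.inf x) = 1 := S.purity _ c d
  have e2 : x⁻¹ * S.Δ ^ (S.sup x + (S.sup x - S.inf x)) ∈ S.P := by
    refine S.mem_P_of_eq (S.P.mul_mem b c) ?_
    rw [zpow_add]
    group
  have := S.sup_min x _ e2
  omega

lemma inf_le_sup (x : G) : S.inf x ≤ S.sup x := by
  have := S.len_nonneg x
  unfold len at this
  omega

/-! ### The initial and final factors -/

lemma iota_le_delta (x : G) : S.le (S.iota x) S.Δ := S.wedge_le_right' _ _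

lemma iota_le (x : G) : S.le (S.iota x) (x * S.Δ ^ (-S.inf x)) := S.wedge_le_left' _ _

lemma one_le_iota (x : G) : S.le 1 (S.iota x) := by
  refine S.le_wedge' ?_ S.one_le_delta
  have : S.le (S.Δ ^ (0:ℤ)) (x * S.Δ ^ (-S.inf x)) := by
    refine S.delta_pow_le.mpr ?_
    rw [S.inf_mul_delta]
    omega
  simpa using this

lemma iota_mem (x : G) : S.iota x ∈ S.P := S.one_le_iff.mp (S.one_le_iota x)

lemma one_le_phi (x : G) : S.le 1 (S.phi x) := by
  rw [S.one_le_iff]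
  exact S.wedge_le_right' _ _

lemma phi_mem (x : G) : S.phi x ∈ S.P := S.one_le_iff.mp (S.one_le_phi x)

lemma wedge_delta_right (x : G) :
    S.wedge (S.Δ ^ (S.sup x - 1)) x * S.Δ = S.wedge (S.Δ ^ S.sup x) (x * S.Δ) := by
  have h := S.wedge_mul_delta (S.Δ ^ (S.sup x - 1)) x 1
  rw [show S.Δ ^ (S.sup x - 1) * S.Δ ^ (1:ℤ) = S.Δ ^ S.sup x from by group, zpow_one] at h
  exact h.symm

lemma le_mul_delta_one (x : G) : S.le x (x * S.Δ) := by
  unfold le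
  exact S.mem_P_of_eq S.delta_mem (by group)

lemma phi_le_delta (x : G) : S.le (S.phi x) S.Δ := by
  unfold phi
  have h : S.le x (S.wedge (S.Δ ^ (S.sup x - 1)) x * S.Δ) := by
    rw [S.wedge_delta_right]
    exact S.le_wedge' (S.le_sup' x) (S.le_mul_delta_one x)
  exact (S.le_congr (by group)).mpr h

lemma phi_inv_delta_mem (x : G) : (S.phi x)⁻¹ * S.Δ ∈ S.P := S.phi_le_delta x

lemma iota_inv_eq (x : G) : S.iota x⁻¹ = (S.phi x)⁻¹ * S.Δ := by
  have e1 : S.iota x⁻¹ = S.wedge (x⁻¹ * S.Δ ^ S.sup x) S.Δ := by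
    unfold iota
    rw [S.inf_inv, neg_neg]
  have e2 : (S.phi x)⁻¹ * S.Δ = S.wedge (x⁻¹ * S.Δ ^ S.sup x) S.Δ := by
    calc (S.phi x)⁻¹ * S.Δ
        = x⁻¹ * (S.wedge (S.Δ ^ (S.sup x - 1)) x * S.Δ) := by unfold phi; group
      _ = x⁻¹ * S.wedge (S.Δ ^ S.sup x) (x * S.Δ) := by rw [S.wedge_delta_right]
      _ = S.wedge (x⁻¹ * S.Δ ^ S.sup x) (x⁻¹ * (x * S.Δ)) := by rw [S.mul_wedge]
      _ = S.wedge (x⁻¹ * S.Δ ^ S.sup x) S.Δ := by rw [inv_mul_cancel_left]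
  rw [e1, e2]

lemma pp_eq (x : G) : S.pp x = S.wedge (S.iota x) ((S.phi x)⁻¹ * S.Δ) := by
  unfold pp
  rw [S.iota_inv_eq]

lemma phi_inv_eq (x : G) : S.phi x⁻¹ = S.Δ * (S.iota x)⁻¹ := by
  have h := S.iota_inv_eq x⁻¹
  rw [inv_inv] at h
  rw [h]
  group

/-! ### The preferred prefix in the various cases -/

lemma pp_of_B (x : G) (hB : S.le (S.phi x * S.iota x) S.Δ) : S.pp x = S.iota x := by
  rw [S.pp_eq]
  exact S.wedge_eq_left ((S.le_congr (by group)).mp hB)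

lemma pp_of_A (x : G) (hA : S.le S.Δ (S.phi x * S.iota x)) :
    S.pp x = (S.phi x)⁻¹ * S.Δ := by
  rw [S.pp_eq]
  exact S.wedge_eq_right ((S.le_congr (by group)).mp hA)

lemma sl_eq_cyc_of_B (x : G) (hB : S.le (S.phi x * S.iota x) S.Δ) : S.sl x = S.cyc x := by
  unfold sl cyc
  rw [S.pp_of_B x hB]

lemma sl_eq_tau_dec_of_A (x : G) (hA : S.le S.Δ (S.phi x * S.iota x)) :
    S.sl x = S.tau (S.dec x) := by
  unfold sl tau dec
  rw [S.pp_of_A x hA]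
  group

/-! ### inf and sup bounds for cycling and decycling -/

lemma inf_le_inf_cyc (x : G) : S.inf x ≤ S.inf (S.cyc x) := by
  have hu : (S.iota x)⁻¹ * (x * S.Δ ^ (-S.inf x)) ∈ S.P := S.iota_le x
  have h1 := S.conj_zpow_of (S.inf x) hu
  have h2 := S.P.mul_mem h1 (S.iota_mem x)
  refine S.delta_pow_le.mp ?_
  unfold cyc le
  exact S.mem_P_of_eq h2 (by group)

lemma le_mul_delta_pow (x : G) {k : ℤ} (hk : 0 ≤ k) : S.le x (x * S.Δ ^ k) := by
  unfold le
  exact S.mem_P_of_eq (S.delta_zpow_mem hk) (by group)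

lemma iota_mul_delta (x : G) (k : ℤ) :
    S.iota x * S.Δ ^ k = S.wedge (x * S.Δ ^ (k - S.inf x)) (S.Δ ^ (k + 1)) := by
  unfold iota
  rw [← S.wedge_mul_delta]
  rw [show x * S.Δ ^ (-S.inf x) * S.Δ ^ k = x * S.Δ ^ (k - S.inf x) from by group,
      show S.Δ * S.Δ ^ k = S.Δ ^ (k + 1) from by group]

lemma sup_cyc_le (x : G) (h1 : 1 ≤ S.len x) : S.sup (S.cyc x) ≤ S.sup x := by
  have hl : S.inf x + 1 ≤ S.sup x := by simp only [len] at h1; omega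
  have hstep1 : S.le (S.cyc x) ((S.iota x)⁻¹ * x * S.Δ) := by
    unfold cyc
    exact (S.le_congr (by group)).mpr (S.iota_le_delta x)
  have hx : S.le x (S.iota x * S.Δ ^ (S.sup x - 1)) := by
    rw [S.iota_mul_delta]
    refine S.le_wedge' (S.le_mul_delta_pow x (by omega)) ?_
    rw [show S.sup x - 1 + 1 = S.sup x from by ring]
    exact S.le_sup' x
  have h3 : S.le ((S.iota x)⁻¹ * x) (S.Δ ^ (S.sup x - 1)) := (S.le_congr (by group)).mpr hx
  have hfinal : S.le (S.cyc x) (S.Δ ^ S.sup x) :=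
    S.le_trans' hstep1 ((S.le_congr (by group)).mp ((S.le_mul_delta 1).mpr h3))
  exact S.le_delta_pow.mp hfinal

lemma delta_pow_le_w (x : G) (h1 : 1 ≤ S.len x) :
    S.le (S.Δ ^ S.inf x) (S.wedge (S.Δ ^ (S.sup x - 1)) x) :=
  S.le_wedge' (S.delta_zpow_le (by simp only [len] at h1; omega)) (S.inf_le' x)

lemma inf_le_inf_dec (x : G) (h1 : 1 ≤ S.len x) : S.inf x ≤ S.inf (S.dec x) := by
  have hw : _ ∈ S.P := S.delta_pow_le_w x h1
  have hφ := S.conj_zpow_of (S.inf x) (S.phi_mem x)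
  have h2 := S.P.mul_mem hφ hw
  refine S.delta_pow_le.mp ?_
  unfold dec le
  refine S.mem_P_of_eq h2 ?_
  unfold phi
  group

lemma sup_dec_le (x : G) (h1 : 1 ≤ S.len x) : S.sup (S.dec x) ≤ S.sup x := by
  have hstep1 : S.le (S.dec x) (S.phi x * S.Δ ^ (S.sup x - 1)) := by
    unfold dec
    refine (S.le_congr ?_).mpr (S.wedge_le_left' (S.Δ ^ (S.sup x - 1)) x)
    unfold phi
    group
  have hstep2 : S.le (S.phi x * S.Δ ^ (S.sup x - 1)) (S.Δ ^ S.sup x) := by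
    have h := S.conj_zpow_of (S.sup x - 1) (S.phi_inv_delta_mem x)
    unfold le
    exact S.mem_P_of_eq h (by group)
  exact S.le_delta_pow.mp (S.le_trans' hstep1 hstep2)

/-! ### The condition Δ ≼ φ(x)ι(x) and the inf of the decycling -/

lemma inf_dec_of_A (x : G) (h2 : 1 < S.len x) (hA : S.le S.Δ (S.phi x * S.iota x)) :
    S.inf x + 1 ≤ S.inf (S.dec x) := by
  have hl2 : S.inf x + 2 ≤ S.sup x := by simp only [len] at h2; omega
  have hX1 : S.Δ⁻¹ * (S.phi x * S.iota x) ∈ S.P := hA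
  have hX2 := S.conj_zpow_of (S.inf x) hX1
  have hi1 : S.le (S.iota x * S.Δ ^ S.inf x) (S.Δ ^ (S.sup x - 1)) := by
    have ha : S.le (S.iota x) (S.Δ ^ (S.sup x - 1 - S.inf x)) :=
      S.le_trans' (S.iota_le_delta x)
        ((S.le_congr (by group)).mp
          (S.delta_zpow_le (j := (1:ℤ)) (k := S.sup x - 1 - S.inf x) (by omega)))
    have h := (S.le_mul_delta (S.inf x)).mpr ha
    exact (S.le_congr (by group)).mp h
  have hi2 : S.le (S.iota x * S.Δ ^ S.inf x) x := by
    have h := (S.le_mul_delta (S.inf x)).mpr (S.iota_le x)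
    exact (S.le_congr (by group)).mp h
  have hιW : S.le (S.iota x * S.Δ ^ S.inf x) (S.wedge (S.Δ ^ (S.sup x - 1)) x) :=
    S.le_wedge' hi1 hi2
  have hmul := S.P.mul_mem hX2 (hιW : _ ∈ S.P)
  refine S.delta_pow_le.mp ?_
  unfold le dec
  refine S.mem_P_of_eq hmul ?_
  unfold phi
  group

lemma A_of_inf_dec (x : G) (hd : S.inf x + 1 ≤ S.inf (S.dec x)) :
    S.le S.Δ (S.phi x * S.iota x) := by
  have hΔ : (S.Δ ^ (S.inf x + 1))⁻¹ * S.dec x ∈ S.P := S.delta_pow_le.mpr hd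
  set s := (S.Δ ^ S.inf x)⁻¹ * S.phi x * S.Δ ^ S.inf x with hs
  have step1 : S.le (s⁻¹ * S.Δ) ((S.Δ ^ S.inf x)⁻¹ * (S.wedge (S.Δ ^ (S.sup x - 1)) x)) := by
    unfold le
    refine S.mem_P_of_eq hΔ ?_
    rw [hs]
    unfold dec phi
    group
  have step1' : S.le (s⁻¹ * S.Δ) ((S.Δ ^ S.inf x)⁻¹ * x) :=
    S.le_trans' step1 (S.le_cancel_left.mpr (S.wedge_le_right' _ _))
  have step2 : S.le (s⁻¹ * S.Δ) S.Δ := by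
    unfold le
    refine S.mem_P_of_eq (S.conj_zpow_of (S.inf x + 1) (S.phi_mem x)) ?_
    rw [hs]
    group
  have step3 : S.le (s⁻¹ * S.Δ) (S.wedge ((S.Δ ^ S.inf x)⁻¹ * x) S.Δ) := S.le_wedge' step1' step2
  have e : (S.Δ ^ S.inf x)⁻¹ * S.iota x * S.Δ ^ S.inf x
      = S.wedge ((S.Δ ^ S.inf x)⁻¹ * x) S.Δ := by
    unfold iota
    rw [S.mul_wedge, ← S.wedge_mul_delta]
    rw [show (S.Δ ^ S.inf x)⁻¹ * (x * S.Δ ^ (-S.inf x)) * S.Δ ^ S.inf x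
          = (S.Δ ^ S.inf x)⁻¹ * x from by group,
        show (S.Δ ^ S.inf x)⁻¹ * S.Δ * S.Δ ^ S.inf x = S.Δ from by group]
  rw [← e] at step3
  refine (S.conj_zpow_mem (S.inf x) (S.Δ⁻¹ * (S.phi x * S.iota x))).mp
    (S.mem_P_of_eq (step3 : _ ∈ S.P) ?_)
  rw [hs]
  group

lemma inf_dec_of_notA (x : G) (h2 : 1 < S.len x)
    (hA' : ¬ S.le S.Δ (S.phi x * S.iota x)) : S.inf (S.dec x) = S.inf x := by
  refine le_antisymm ?_ (S.inf_le_inf_dec x (le_of_lt h2))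
  by_contra hc
  push_neg at hc
  exact hA' (S.A_of_inf_dec x (by omega))

/-! ### Local computation of heads of products with a simple element -/

lemma wedge_simple_mul {a b : G} (ha2 : S.le a S.Δ) (hb : S.le 1 b) :
    S.wedge (a * b) S.Δ = a * S.wedge b (a⁻¹ * S.Δ) := by
  refine S.wedge_eq (S.le_cancel_left.mpr (S.wedge_le_left' _ _)) ?_ (fun d h1 h2 => ?_)
  · have h := (S.le_cancel_left (c := a)).mpr (S.wedge_le_right' b (a⁻¹ * S.Δ))
    exact (S.le_congr (by group)).mp h
  · have hv1 : S.le d (S.vee d a) := S.le_vee_left' d a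
    have hvΔ : S.le (S.vee d a) S.Δ := S.vee_le' h2 ha2
    have hvab : S.le (S.vee d a) (a * b) := S.vee_le' h1 ((S.le_congr (by group)).mp hb)
    have hb' : S.le (a⁻¹ * S.vee d a) b := (S.le_congr (by group)).mp hvab
    have hΔ' : S.le (a⁻¹ * S.vee d a) (a⁻¹ * S.Δ) := S.le_cancel_left.mpr hvΔ
    have hw := S.le_wedge' hb' hΔ'
    exact S.le_trans' hv1 ((S.le_congr (by group)).mp hw)

lemma iota_dec_eq (x : G) (h2 : 1 < S.len x) (hA' : ¬ S.le S.Δ (S.phi x * S.iota x)) :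
    S.iota (S.dec x) = S.phi x * S.pp x := by
  have hl2 : S.inf x + 2 ≤ S.sup x := by simp only [len] at h2; omega
  have hinf := S.inf_dec_of_notA x h2 hA'
  have hWpos : S.le 1 (S.wedge (S.Δ ^ (S.sup x - 1)) x * S.Δ ^ (-S.inf x)) := by
    have h : _ ∈ S.P := S.delta_pow_le_w x (le_of_lt h2)
    unfold le
    exact S.mem_P_of_eq (S.conj_zpow_of (-S.inf x) h) (by group)
  have hfΔ : S.le ((S.phi x)⁻¹ * S.Δ) S.Δ := by
    unfold le
    exact S.mem_P_of_eq (S.conj_zpow_of 1 (S.phi_mem x)) (by group)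
  have hfd : S.le ((S.phi x)⁻¹ * S.Δ) (S.Δ ^ (S.sup x - 1 - S.inf x)) :=
    S.le_trans' hfΔ ((S.le_congr (by group)).mp
      (S.delta_zpow_le (j := (1:ℤ)) (k := S.sup x - 1 - S.inf x) (by omega)))
  have e0 : S.iota (S.dec x)
      = S.wedge (S.phi x * (S.wedge (S.Δ ^ (S.sup x - 1)) x * S.Δ ^ (-S.inf x))) S.Δ := by
    unfold iota
    rw [hinf]
    rw [show S.dec x * S.Δ ^ (-S.inf x)
        = S.phi x * (S.wedge (S.Δ ^ (S.sup x - 1)) x * S.Δ ^ (-S.inf x)) from by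
      unfold dec phi; group]
  rw [e0, S.wedge_simple_mul (S.phi_le_delta x) hWpos]
  congr 1
  rw [S.pp_eq]
  have eL : S.wedge (S.Δ ^ (S.sup x - 1)) x * S.Δ ^ (-S.inf x)
      = S.wedge (S.Δ ^ (S.sup x - 1 - S.inf x)) (x * S.Δ ^ (-S.inf x)) := by
    rw [← S.wedge_mul_delta]
    rw [show S.Δ ^ (S.sup x - 1) * S.Δ ^ (-S.inf x) = S.Δ ^ (S.sup x - 1 - S.inf x) from by group]
  rw [eL, S.wedge_wedge_of_le hfd]
  unfold iota
  rw [S.wedge_comm (x * S.Δ ^ (-S.inf x)) S.Δ, S.wedge_wedge_of_le hfΔ]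

lemma cyc_dec_eq_sl (x : G) (h2 : 1 < S.len x) (hA' : ¬ S.le S.Δ (S.phi x * S.iota x)) :
    S.cyc (S.dec x) = S.sl x := by
  unfold cyc
  rw [S.iota_dec_eq x h2 hA']
  unfold sl dec
  group

/-! ### Duality between cycling and decycling -/

lemma pp_inv (x : G) : S.pp x⁻¹ = S.pp x := by
  unfold pp
  rw [inv_inv]
  exact S.wedge_comm _ _

lemma sl_inv (x : G) : S.sl x⁻¹ = (S.sl x)⁻¹ := by
  unfold sl
  rw [S.pp_inv]
  group

lemma cyc_inv (x : G) : S.cyc x⁻¹ = S.Δ⁻¹ * (S.dec x)⁻¹ * S.Δ := by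
  unfold cyc dec
  rw [S.iota_inv_eq]
  group

lemma dec_inv (x : G) : S.dec x⁻¹ = S.Δ * (S.cyc x)⁻¹ * S.Δ⁻¹ := by
  unfold dec cyc
  rw [S.phi_inv_eq]
  group

lemma wedge_mul_delta_one (a b : G) : S.wedge (a * S.Δ) (b * S.Δ) = S.wedge a b * S.Δ := by
  have h := S.wedge_mul_delta a b 1
  rw [zpow_one] at h
  exact h

lemma tau_wedge (a b : G) :
    S.Δ⁻¹ * S.wedge a b * S.Δ = S.wedge (S.Δ⁻¹ * a * S.Δ) (S.Δ⁻¹ * b * S.Δ) := by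
  rw [S.mul_wedge, ← S.wedge_mul_delta_one]

lemma iota_tau (x : G) : S.iota (S.tau x) = S.tau (S.iota x) := by
  have h2 : S.tau (S.iota x) = S.wedge (S.tau x * S.Δ ^ (-S.inf x)) S.Δ := by
    unfold tau iota
    rw [S.tau_wedge]
    rw [show S.Δ⁻¹ * (x * S.Δ ^ (-S.inf x)) * S.Δ
        = S.Δ⁻¹ * x * S.Δ * S.Δ ^ (-S.inf x) from by group,
        show S.Δ⁻¹ * S.Δ * S.Δ = S.Δ from by group]
  have h1 : S.iota (S.tau x) = S.wedge (S.tau x * S.Δ ^ (-S.inf x)) S.Δ := by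
    unfold iota
    rw [S.inf_tau]
  rw [h1, h2]

lemma phi_tau (x : G) : S.phi (S.tau x) = S.tau (S.phi x) := by
  have h1 : S.phi (S.tau x) = (S.wedge (S.Δ ^ (S.sup x - 1)) (S.tau x))⁻¹ * S.tau x := by
    unfold phi
    rw [S.sup_tau]
  have h2 : S.wedge (S.Δ ^ (S.sup x - 1)) (S.tau x) = S.tau (S.wedge (S.Δ ^ (S.sup x - 1)) x) := by
    unfold tau
    rw [S.tau_wedge]
    rw [show S.Δ⁻¹ * S.Δ ^ (S.sup x - 1) * S.Δ = S.Δ ^ (S.sup x - 1) from by group]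
  rw [h1, h2]
  unfold tau phi
  group

lemma cyc_tau (x : G) : S.cyc (S.tau x) = S.tau (S.cyc x) := by
  unfold cyc
  rw [S.iota_tau]
  unfold tau
  group

lemma dec_tau (x : G) : S.dec (S.tau x) = S.tau (S.dec x) := by
  unfold dec
  rw [S.phi_tau]
  unfold tau
  group

lemma cyc_conj_delta (g : G) : S.cyc (S.Δ * g * S.Δ⁻¹) = S.Δ * S.cyc g * S.Δ⁻¹ := by
  have h := S.cyc_tau (S.Δ * g * S.Δ⁻¹)
  rw [show S.tau (S.Δ * g * S.Δ⁻¹) = g from by unfold tau; group] at h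
  rw [h]
  unfold tau
  group

lemma inf_conj_delta (g : G) : S.inf (S.Δ * g * S.Δ⁻¹) = S.inf g := by
  have h := S.inf_tau (S.Δ * g * S.Δ⁻¹)
  rw [show S.tau (S.Δ * g * S.Δ⁻¹) = g from by unfold tau; group] at h
  exact h.symm

lemma dec_cyc_eq_sl (x : G) (h2 : 1 < S.len x) (hB' : ¬ S.le (S.phi x * S.iota x) S.Δ) :
    S.dec (S.cyc x) = S.sl x := by
  have hlen : 1 < S.len x⁻¹ := by rw [S.len_inv]; exact h2
  have hA2 : ¬ S.le S.Δ (S.phi x⁻¹ * S.iota x⁻¹) := by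
    intro hcon
    apply hB'
    rw [S.phi_inv_eq, S.iota_inv_eq] at hcon
    exact S.mem_P_of_eq (hcon : _ ∈ S.P) (by group)
  have h39 := S.cyc_dec_eq_sl x⁻¹ hlen hA2
  rw [S.dec_inv, S.sl_inv, S.cyc_conj_delta, S.cyc_inv] at h39
  apply inv_injective
  rw [← h39]
  group

lemma sup_cyc_of_B (x : G) (h2 : 1 < S.len x) (hB : S.le (S.phi x * S.iota x) S.Δ) :
    S.sup (S.cyc x) ≤ S.sup x - 1 := by
  have hlen : 1 < S.len x⁻¹ := by rw [S.len_inv]; exact h2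
  have hA2 : S.le S.Δ (S.phi x⁻¹ * S.iota x⁻¹) := by
    rw [S.phi_inv_eq, S.iota_inv_eq]
    exact S.mem_P_of_eq (hB : _ ∈ S.P) (by group)
  have h := S.inf_dec_of_A x⁻¹ hlen hA2
  rw [S.dec_inv, S.inf_inv, S.inf_conj_delta, S.inf_inv] at h
  omega

/-! ### Length monotonicity -/

lemma sup_delta_pow (k : ℤ) : S.sup (S.Δ ^ k) = k := by
  refine le_antisymm (S.le_delta_pow.mp (S.le_refl' _)) ?_
  have h1 := S.inf_le_sup (S.Δ ^ k)
  have h2 : k ≤ S.inf (S.Δ ^ k) := S.delta_pow_le.mp (S.le_refl' _)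
  omega

lemma inf_delta_pow (k : ℤ) : S.inf (S.Δ ^ k) = k := by
  refine le_antisymm ?_ (S.delta_pow_le.mp (S.le_refl' _))
  have h1 := S.inf_le_sup (S.Δ ^ k)
  have h2 : S.sup (S.Δ ^ k) ≤ k := S.le_delta_pow.mp (S.le_refl' _)
  omega

lemma eq_delta_pow_of_len_zero {x : G} (h : S.len x = 0) : x = S.Δ ^ S.inf x := by
  simp only [len] at h
  refine S.le_antisymm' ?_ (S.inf_le' x)
  have h2 := S.le_sup' x
  rwa [show S.sup x = S.inf x from by omega] at h2

lemma cyc_delta_pow (k : ℤ) : S.cyc (S.Δ ^ k) = S.Δ ^ k := by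
  have hι : S.iota (S.Δ ^ k) = 1 := by
    have h : S.Δ ^ k * S.Δ ^ (-S.inf (S.Δ ^ k)) = 1 := by
      rw [S.inf_delta_pow]; group
    unfold iota
    rw [h]
    exact S.wedge_eq_left S.one_le_delta
  unfold cyc
  rw [hι]
  group

lemma dec_delta_pow (k : ℤ) : S.dec (S.Δ ^ k) = S.Δ ^ k := by
  have hφ : S.phi (S.Δ ^ k) = S.Δ := by
    have h1 : S.wedge (S.Δ ^ (S.sup (S.Δ ^ k) - 1)) (S.Δ ^ k) = S.Δ ^ (k - 1) := by
      rw [S.sup_delta_pow]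
      exact S.wedge_eq_left (S.delta_zpow_le (by omega))
    unfold phi
    rw [h1]
    group
  unfold dec
  rw [hφ]
  group

lemma cyc_of_len_zero {x : G} (h : S.len x = 0) : S.cyc x = x := by
  have e := S.eq_delta_pow_of_len_zero h
  calc S.cyc x = S.cyc (S.Δ ^ S.inf x) := by rw [← e]
    _ = S.Δ ^ S.inf x := S.cyc_delta_pow _
    _ = x := e.symm

lemma dec_of_len_zero {x : G} (h : S.len x = 0) : S.dec x = x := by
  have e := S.eq_delta_pow_of_len_zero h
  calc S.dec x = S.dec (S.Δ ^ S.inf x) := by rw [← e]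
    _ = S.Δ ^ S.inf x := S.dec_delta_pow _
    _ = x := e.symm

lemma len_cyc_le (x : G) : S.len (S.cyc x) ≤ S.len x := by
  rcases eq_or_lt_of_le (S.len_nonneg x) with h | h
  · rw [S.cyc_of_len_zero h.symm]
  · have h1 := S.inf_le_inf_cyc x
    have h2 := S.sup_cyc_le x (by omega)
    simp only [len] at *
    omega

lemma len_dec_le (x : G) : S.len (S.dec x) ≤ S.len x := by
  rcases eq_or_lt_of_le (S.len_nonneg x) with h | h
  · rw [S.dec_of_len_zero h.symm]
  · have h1 := S.inf_le_inf_dec x (by omega)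
    have h2 := S.sup_dec_le x (by omega)
    simp only [len] at *
    omega

end Garside

open Garside in
theorem statement4 {G : Type*} [Group G] (S : Garside G) (x : G) (h : 1 < S.len x) :
    (S.le S.Δ (S.phi x * S.iota x) → S.le (S.phi x * S.iota x) S.Δ →
      S.sl x = S.tau (S.dec x) ∧ S.sl x = S.cyc x ∧ S.len (S.sl x) < S.len x) ∧
    (¬ S.le S.Δ (S.phi x * S.iota x) → S.le (S.phi x * S.iota x) S.Δ →
      S.sl x = S.cyc (S.dec x) ∧ S.sl x = S.cyc x ∧ S.len (S.sl x) < S.len x) ∧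
    (S.le S.Δ (S.phi x * S.iota x) → ¬ S.le (S.phi x * S.iota x) S.Δ →
      S.sl x = S.tau (S.dec x) ∧ S.sl x = S.dec (S.cyc x) ∧ S.len (S.sl x) < S.len x) ∧
    (¬ S.le S.Δ (S.phi x * S.iota x) → ¬ S.le (S.phi x * S.iota x) S.Δ →
      S.sl x = S.cyc (S.dec x) ∧ S.sl x = S.dec (S.cyc x)) ∧
    ((S.len (S.cyc (S.dec x)) = S.len x ∨ S.len (S.dec (S.cyc x)) = S.len x) →
      (¬ S.le S.Δ (S.phi x * S.iota x) ∧ ¬ S.le (S.phi x * S.iota x) S.Δ) ∧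
        S.dec (S.cyc x) = S.cyc (S.dec x)) := by
  have hlen1 : 1 ≤ S.len x := le_of_lt h
  refine ⟨?_, ?_, ?_, ?_, ?_⟩
  · intro hA hB
    refine ⟨S.sl_eq_tau_dec_of_A x hA, S.sl_eq_cyc_of_B x hB, ?_⟩
    rw [S.sl_eq_tau_dec_of_A x hA, S.len_tau]
    have i1 := S.inf_dec_of_A x h hA
    have i2 := S.sup_dec_le x hlen1
    simp only [Garside.len] at *
    omega
  · intro hA' hB
    refine ⟨(S.cyc_dec_eq_sl x h hA').symm, S.sl_eq_cyc_of_B x hB, ?_⟩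
    rw [S.sl_eq_cyc_of_B x hB]
    have i1 := S.inf_le_inf_cyc x
    have i2 := S.sup_cyc_of_B x h hB
    simp only [Garside.len] at *
    omega
  · intro hA hB'
    refine ⟨S.sl_eq_tau_dec_of_A x hA, (S.dec_cyc_eq_sl x h hB').symm, ?_⟩
    rw [S.sl_eq_tau_dec_of_A x hA, S.len_tau]
    have i1 := S.inf_dec_of_A x h hA
    have i2 := S.sup_dec_le x hlen1
    simp only [Garside.len] at *
    omega
  · intro hA' hB'
    exact ⟨(S.cyc_dec_eq_sl x h hA').symm, (S.dec_cyc_eq_sl x h hB').symm⟩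
  · intro H
    by_cases hA : S.le S.Δ (S.phi x * S.iota x)
    · exfalso
      have hdec : S.len (S.dec x) ≤ S.len x - 1 := by
        have i1 := S.inf_dec_of_A x h hA
        have i2 := S.sup_dec_le x hlen1
        simp only [Garside.len] at *
        omega
      have l1 : S.len (S.cyc (S.dec x)) ≤ S.len x - 1 :=
        le_trans (S.len_cyc_le _) hdec
      have l2 : S.len (S.dec (S.cyc x)) ≤ S.len x - 1 := by
        by_cases hB : S.le (S.phi x * S.iota x) S.Δ
        · have hcyc : S.len (S.cyc x) ≤ S.len x - 1 := by
            have i1 := S.inf_le_inf_cyc x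
            have i2 := S.sup_cyc_of_B x h hB
            simp only [Garside.len] at *
            omega
          exact le_trans (S.len_dec_le _) hcyc
        · rw [S.dec_cyc_eq_sl x h hB, S.sl_eq_tau_dec_of_A x hA, S.len_tau]
          exact hdec
      rcases H with H | H <;> omega
    · by_cases hB : S.le (S.phi x * S.iota x) S.Δ
      · exfalso
        have hcyc : S.len (S.cyc x) ≤ S.len x - 1 := by
          have i1 := S.inf_le_inf_cyc x
          have i2 := S.sup_cyc_of_B x h hB
          simp only [Garside.len] at *
          omega
        have l1 : S.len (S.cyc (S.dec x)) ≤ S.len x - 1 := by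
          rw [S.cyc_dec_eq_sl x h hA, S.sl_eq_cyc_of_B x hB]
          exact hcyc
        have l2 : S.len (S.dec (S.cyc x)) ≤ S.len x - 1 :=
          le_trans (S.len_dec_le _) hcyc
        rcases H with H | H <;> omega
      · exact ⟨⟨hA, hB⟩, by rw [S.dec_cyc_eq_sl x h hB, S.cyc_dec_eq_sl x h hA]⟩

end GarsidePaper
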